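/- Let (G,m) be a finite weighted digraph with sources F_1,…,F_f, sinks S_1,…,S_s (assumed disjoint from the sources), and stream T. Then the spectrum of L^+ (with multiplicities) equals the union of the spectra of the compressions L^+_{F_i} for i = 1,…,f together with the spectrum of L^+_{T ⊔ S}, and the spectrum of L^- equals the union of the spectra of L^-_{S_i} for i = 1,…,s together with the spectrum of L^-_{T ⊔ F}. -/

import Mathlib

open Finset Polynomial

variable {V A : Type*}

/-- Reachability by a directed path (`u ⇝ v`). -/
def Reaches (tail head : A → V) : V → V → Prop :=
  Relation.ReflTransGen (fun u v => ∃ a, tail a = u ∧ head a = v)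

/-- A source: the vertex set of an SCC with no arcs entering it from its complement. -/
def IsSourceF (tail head : A → V) (F : Finset V) : Prop :=
  F.Nonempty ∧ (∀ u ∈ F, ∀ v ∈ F, Reaches tail head u v) ∧
    (∀ u ∈ F, ∀ v, Reaches tail head u v → Reaches tail head v u → v ∈ F) ∧
    (∀ a, head a ∈ F → tail a ∈ F)

/-- A sink: the vertex set of an SCC with no arcs leaving it into its complement. -/
def IsSinkF (tail head : A → V) (S : Finset V) : Prop :=
  S.Nonempty ∧ (∀ u ∈ S, ∀ v ∈ S, Reaches tail head u v) ∧
    (∀ u ∈ S, ∀ v, Reaches tail head u v → Reaches tail head v u → v ∈ S) ∧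
    (∀ a, tail a ∈ S → head a ∈ S)

/-- The in Laplacian `L⁺ = (d⁺)* d` in its explicit form. -/
noncomputable def Lplus [Fintype A] [DecidableEq V] (tail head : A → V)
    (mV : V → ℝ) (mA : A → ℝ) (φ : V → ℂ) (v : V) : ℂ :=
  (mV v : ℂ)⁻¹ * ∑ a ∈ univ.filter (fun a => head a = v), (φ v - φ (tail a)) * (mA a : ℂ)

/-- The out Laplacian `L⁻ = (d⁻)* d` in its explicit form. -/
noncomputable def Lminus [Fintype A] [DecidableEq V] (tail head : A → V)
    (mV : V → ℝ) (mA : A → ℝ) (φ : V → ℂ) (v : V) : ℂ :=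
  (mV v : ℂ)⁻¹ * ∑ a ∈ univ.filter (fun a => tail a = v), (φ v - φ (head a)) * (mA a : ℂ)

/-- Matrix of `L⁺` in the coordinate basis. -/
noncomputable def Mplus [Fintype A] [DecidableEq V] (tail head : A → V)
    (mV : V → ℝ) (mA : A → ℝ) : Matrix V V ℂ :=
  fun v w => Lplus tail head mV mA (fun u => if u = w then 1 else 0) v

/-- Matrix of `L⁻` in the coordinate basis. -/
noncomputable def Mminus [Fintype A] [DecidableEq V] (tail head : A → V)
    (mV : V → ℝ) (mA : A → ℝ) : Matrix V V ℂ :=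
  fun v w => Lminus tail head mV mA (fun u => if u = w then 1 else 0) v

/-- Compression (submatrix) of a matrix to a subset of vertices. -/
def compressM (M : Matrix V V ℂ) (W : Finset V) :
    Matrix {v : V // v ∈ W} {v : V // v ∈ W} ℂ :=
  M.submatrix Subtype.val Subtype.val

section Aux

variable {W W' : Type*} [Fintype W] [DecidableEq W] [Fintype W'] [DecidableEq W']

lemma charpoly_eq_of_equiv (M : Matrix W W ℂ) (N : Matrix W' W' ℂ) (e : W ≃ W')
    (h : ∀ v w, M v w = N (e v) (e w)) : M.charpoly = N.charpoly := by
  have hM : M = Matrix.reindex e.symm e.symm N := by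
    ext v w
    simp [h v w, Matrix.reindex_apply]
  rw [hM, Matrix.charpoly_reindex]

/-- Two-block triangular decomposition of the characteristic polynomial. -/
lemma charpoly_two_block (M : Matrix W W ℂ) (B : Finset W)
    (h : ∀ v ∈ B, ∀ w, w ∉ B → M v w = 0) :
    M.charpoly = (compressM M B).charpoly * (compressM M (univ \ B)).charpoly := by
  classical
  let e : {v // v ∈ B} ⊕ {v // ¬ v ∈ B} ≃ W := Equiv.sumCompl _
  have h1 : (M.submatrix e e).charpoly = M.charpoly := by
    have : M.submatrix ⇑e ⇑e = Matrix.reindex e.symm e.symm M := by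
      ext v w; simp [Matrix.reindex_apply]
    rw [this, Matrix.charpoly_reindex]
  have h2 : M.submatrix ⇑e ⇑e =
      Matrix.fromBlocks (compressM M B) 0
        (M.submatrix Subtype.val Subtype.val : Matrix {v // ¬ v ∈ B} {v // v ∈ B} ℂ)
          (M.submatrix Subtype.val Subtype.val) := by
    ext (v | v) (w | w)
    · rfl
    · exact h v.1 v.2 w.1 w.2
    · rfl
    · rfl
  have h3 : (M.submatrix (Subtype.val : {v // ¬ v ∈ B} → W) Subtype.val).charpoly =
      (compressM M (univ \ B)).charpoly := by
    refine charpoly_eq_of_equiv _ _ (Equiv.subtypeEquivRight fun v => ?_) fun v w => rfl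
    simp
  rw [← h1, h2, Matrix.charpoly_fromBlocks_zero₁₂, h3]

universe u

/-- Multi-block decomposition. -/
lemma charpoly_multi_block {ι : Type*} [DecidableEq ι] :
    ∀ (n : ℕ) {W : Type u} [Fintype W] [DecidableEq W]
      (M : Matrix W W ℂ) (s : Finset ι) (F : ι → Finset W), s.card = n →
      (∀ i ∈ s, ∀ j ∈ s, i ≠ j → Disjoint (F i) (F j)) →
      (∀ i ∈ s, ∀ v ∈ F i, ∀ w, w ∉ F i → M v w = 0) →
      M.charpoly = (compressM M (univ \ s.biUnion F)).charpoly *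
        ∏ i ∈ s, (compressM M (F i)).charpoly := by
  intro n
  induction n with
  | zero =>
    intro W _ _ M s F hcard _ _
    rw [Finset.card_eq_zero] at hcard
    subst hcard
    simp only [Finset.biUnion_empty, Finset.prod_empty, mul_one]
    refine (charpoly_eq_of_equiv (compressM M (univ \ ∅)) M
      (Equiv.subtypeEquivRight (q := fun _ => True) (by simp) |>.trans
        (Equiv.subtypeUnivEquiv fun v => trivial)) fun v w => rfl).symm
  | succ n ih =>
    intro W _ _ M s F hcard hdis hrow
    obtain ⟨i, hi⟩ : s.Nonempty := Finset.card_pos.mp (by omega)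
    set t := s.erase i with ht
    have htcard : t.card = n := by
      rw [ht, Finset.card_erase_of_mem hi]; omega
    -- peel off block `F i`
    have step := charpoly_two_block M (F i) (hrow i hi)
    set W' := {v : W // v ∈ univ \ F i}
    set M' : Matrix W' W' ℂ := compressM M (univ \ F i) with hM'
    set F' : ι → Finset W' := fun j => univ.filter (fun v => v.val ∈ F j) with hF'
    have hmemF' : ∀ (j : ι) (x : W'), x ∈ F' j ↔ x.val ∈ F j := by
      intro j x; simp [hF']
    have hsub : ∀ j ∈ t, F j ⊆ univ \ F i := by
      intro j hj v hv
      have hne : j ≠ i := Finset.ne_of_mem_erase hj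
      have := hdis j (Finset.mem_of_mem_erase hj) i hi hne
      simp only [Finset.mem_sdiff, Finset.mem_univ, true_and]
      exact Finset.disjoint_left.mp this hv
    have ihM' := ih M' t F' htcard
      (by
        intro j hj k hk hjk
        rw [Finset.disjoint_left]
        intro x hx hx'
        rw [hmemF'] at hx hx'
        exact Finset.disjoint_left.mp
          (hdis j (Finset.mem_of_mem_erase hj) k (Finset.mem_of_mem_erase hk) hjk) hx hx')
      (by
        intro j hj v hv w hw
        rw [hmemF'] at hv
        have hw' : w.val ∉ F j := fun hc => hw ((hmemF' j w).mpr hc)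
        exact hrow j (Finset.mem_of_mem_erase hj) v.val hv w.val hw')
    -- identify the compressed blocks
    have hblocks : ∀ j ∈ t, (compressM M' (F' j)).charpoly = (compressM M (F j)).charpoly := by
      intro j hj
      refine charpoly_eq_of_equiv _ _ ⟨fun x => ⟨x.val.val, (hmemF' j x.val).mp x.2⟩,
        fun v => ⟨⟨v.val, hsub j hj v.2⟩, (hmemF' j _).mpr v.2⟩, ?_, ?_⟩ fun v w => rfl
      · intro x; rfl
      · intro v; rfl
    have hrest : (compressM M' (univ \ t.biUnion F')).charpoly =
        (compressM M (univ \ s.biUnion F)).charpoly := by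
      have hmem : ∀ x : W', x ∈ univ \ t.biUnion F' ↔ x.val ∈ univ \ s.biUnion F := by
        intro x
        obtain ⟨v, hv⟩ := x
        simp only [Finset.mem_sdiff, Finset.mem_univ, true_and, Finset.mem_biUnion,
          not_exists, not_and] at *
        constructor
        · rintro h j hj hvj
          rcases eq_or_ne j i with rfl | hne
          · exact (Finset.mem_sdiff.mp hv).2 hvj
          · exact h j (Finset.mem_erase.mpr ⟨hne, hj⟩) ((hmemF' j ⟨v, hv⟩).mpr hvj)
        · intro h j hj hvj
          exact h j (Finset.mem_of_mem_erase hj) ((hmemF' j ⟨v, hv⟩).mp hvj)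
      refine charpoly_eq_of_equiv _ _
        ⟨fun x => ⟨x.val.val, (hmem x.val).mp x.2⟩,
         fun v => ⟨⟨v.val, by
            have := v.2
            simp only [Finset.mem_sdiff, Finset.mem_univ, true_and, Finset.mem_biUnion,
              not_exists, not_and] at this ⊢
            exact this i hi⟩, (hmem _).mpr v.2⟩, fun x => rfl, fun v => rfl⟩
        fun v w => rfl
    rw [step, ihM', Finset.prod_congr rfl hblocks, hrest,
      ← Finset.mul_prod_erase s _ hi, ← ht]
    ring

end Aux

/-- Decomposition of the spectrum (with multiplicities, expressed via characteristic
polynomials): for the in Laplacian, the spectrum of `L⁺` is the union of the spectra of its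
compressions to the sources `F_i` together with the spectrum of its compression to `T ⊔ S`;
analogously for the out Laplacian with sinks `S_j` and `T ⊔ F`. -/
theorem stmt_12 [Fintype V] [Fintype A] [DecidableEq V]
    {ι κ : Type*} [Fintype ι] [DecidableEq ι] [Fintype κ] [DecidableEq κ]
    (tail head : A → V) (mV : V → ℝ) (mA : A → ℝ)
    (hmV : ∀ v, 0 < mV v) (hmA : ∀ a, 0 < mA a)
    (Fi : ι → Finset V) (Si : κ → Finset V)
    (hFi : ∀ i, IsSourceF tail head (Fi i)) (hFinj : Function.Injective Fi)
    (hFall : ∀ F, IsSourceF tail head F → ∃ i, F = Fi i)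
    (hSi : ∀ j, IsSinkF tail head (Si j)) (hSinj : Function.Injective Si)
    (hSall : ∀ S, IsSinkF tail head S → ∃ j, S = Si j)
    (hdisj : ∀ i j, Disjoint (Fi i) (Si j)) :
    ((Mplus tail head mV mA).charpoly =
      (compressM (Mplus tail head mV mA)
          ((univ \ ((univ : Finset ι).biUnion Fi ∪ (univ : Finset κ).biUnion Si))
            ∪ (univ : Finset κ).biUnion Si)).charpoly *
        ∏ i : ι, (compressM (Mplus tail head mV mA) (Fi i)).charpoly) ∧
    ((Mminus tail head mV mA).charpoly =
      (compressM (Mminus tail head mV mA)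
          ((univ \ ((univ : Finset ι).biUnion Fi ∪ (univ : Finset κ).biUnion Si))
            ∪ (univ : Finset ι).biUnion Fi)).charpoly *
        ∏ j : κ, (compressM (Mminus tail head mV mA) (Si j)).charpoly) := by
  classical
  have hFdis : ∀ i j : ι, i ≠ j → Disjoint (Fi i) (Fi j) := by
    intro i j hne
    rw [Finset.disjoint_left]
    intro u hui huj
    apply hne
    apply hFinj
    ext v
    constructor
    · intro hv
      exact (hFi j).2.2.1 u huj v ((hFi i).2.1 u hui v hv) ((hFi i).2.1 v hv u hui)
    · intro hv
      exact (hFi i).2.2.1 u hui v ((hFi j).2.1 u huj v hv) ((hFi j).2.1 v hv u huj)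
  have hSdis : ∀ i j : κ, i ≠ j → Disjoint (Si i) (Si j) := by
    intro i j hne
    rw [Finset.disjoint_left]
    intro u hui huj
    apply hne
    apply hSinj
    ext v
    constructor
    · intro hv
      exact (hSi j).2.2.1 u huj v ((hSi i).2.1 u hui v hv) ((hSi i).2.1 v hv u hui)
    · intro hv
      exact (hSi i).2.2.1 u hui v ((hSi j).2.1 u huj v hv) ((hSi j).2.1 v hv u huj)
  have hFS : ∀ v ∈ (univ : Finset κ).biUnion Si, v ∉ (univ : Finset ι).biUnion Fi := by
    intro v hv hv'
    rw [Finset.mem_biUnion] at hv hv'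
    obtain ⟨j, -, hj⟩ := hv
    obtain ⟨i, -, hi⟩ := hv'
    exact Finset.disjoint_left.mp (hdisj i j) hi hj
  have hset : (univ \ ((univ : Finset ι).biUnion Fi ∪ (univ : Finset κ).biUnion Si))
      ∪ (univ : Finset κ).biUnion Si = univ \ (univ : Finset ι).biUnion Fi := by
    ext v
    simp only [Finset.mem_union, Finset.mem_sdiff, Finset.mem_univ, true_and, not_or]
    constructor
    · rintro (⟨h1, -⟩ | h)
      · exact h1
      · exact hFS v h
    · intro h
      by_cases hs : v ∈ (univ : Finset κ).biUnion Si
      · exact Or.inr hs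
      · exact Or.inl ⟨h, hs⟩
  have hset' : (univ \ ((univ : Finset ι).biUnion Fi ∪ (univ : Finset κ).biUnion Si))
      ∪ (univ : Finset ι).biUnion Fi = univ \ (univ : Finset κ).biUnion Si := by
    ext v
    simp only [Finset.mem_union, Finset.mem_sdiff, Finset.mem_univ, true_and, not_or]
    constructor
    · rintro (⟨-, h2⟩ | h)
      · exact h2
      · intro hc
        exact hFS v hc h
    · intro h
      by_cases hs : v ∈ (univ : Finset ι).biUnion Fi
      · exact Or.inr hs
      · exact Or.inl ⟨hs, h⟩
  have hrowP : ∀ i, ∀ v ∈ Fi i, ∀ w, w ∉ Fi i → Mplus tail head mV mA v w = 0 := by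
    intro i v hv w hw
    unfold Mplus Lplus
    rw [Finset.sum_eq_zero, mul_zero]
    intro a ha
    rw [Finset.mem_filter] at ha
    have hvw : v ≠ w := fun h => hw (h ▸ hv)
    have hhead : head a ∈ Fi i := ha.2 ▸ hv
    have htail : tail a ∈ Fi i := (hFi i).2.2.2 a hhead
    have htw : tail a ≠ w := fun h => hw (h ▸ htail)
    simp [if_neg hvw, if_neg htw]
  have hrowM : ∀ j, ∀ v ∈ Si j, ∀ w, w ∉ Si j → Mminus tail head mV mA v w = 0 := by
    intro j v hv w hw
    unfold Mminus Lminus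
    rw [Finset.sum_eq_zero, mul_zero]
    intro a ha
    rw [Finset.mem_filter] at ha
    have hvw : v ≠ w := fun h => hw (h ▸ hv)
    have htail : tail a ∈ Si j := ha.2 ▸ hv
    have hhead : head a ∈ Si j := (hSi j).2.2.2 a htail
    have hhw : head a ≠ w := fun h => hw (h ▸ hhead)
    simp [if_neg hvw, if_neg hhw]
  constructor
  · rw [hset]
    exact charpoly_multi_block (Finset.univ.card) (Mplus tail head mV mA) univ Fi rfl
      (fun i _ j _ hne => hFdis i j hne) (fun i _ => hrowP i)
  · rw [hset']
    exact charpoly_multi_block (Finset.univ.card) (Mminus tail head mV mA) univ Si rfl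
      (fun i _ j _ hne => hSdis i j hne) (fun j _ => hrowM j)
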